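/- For the parabolic maximal operator P_δ and g = 1_S where S = {(x, a x² + s) : x ∈ [0,1], a ∈ [1, 1+δ'], |s| ≤ δ} is a δ-thickened curved rectangle of aperture-width δ' = δ, one has P_δ g(a) ≳ min(1, (δ/|a−1|)^{1/2}) for a ∈ [1,2], and consequently ‖P_δ g‖_{L^q([1,2])} ≳ δ^{1/q} (for q > 2) while ‖g‖_{L^p} ≲ δ^{1/p}, giving the lower bound B(p,q,δ) ≳ δ^{1/q − 1/p}. -/

import Mathlib

open Set MeasureTheory

/-- The `δ`-thickened parabolic maximal operator. -/
noncomputable def Pop (δ : ℝ) (g : ℝ × ℝ → ℝ) (a : ℝ) : ℝ :=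
  ⨆ x : ℝ × ℝ, (2 * δ)⁻¹ *
    ∫ t in (0:ℝ)..1, ∫ s in (-δ)..δ, |g (x.1 + t, x.2 + a * t ^ 2 + s)|

/-- The `δ`-thickened curved rectangle `S` of aperture-width `δ`. -/
def parSet (δ : ℝ) : Set (ℝ × ℝ) :=
  {p : ℝ × ℝ | ∃ x ∈ Icc (0:ℝ) 1, ∃ a ∈ Icc (1:ℝ) (1 + δ), ∃ s : ℝ,
    |s| ≤ δ ∧ p = (x, a * x ^ 2 + s)}

namespace Stmt19Aux

lemma parSet_eq {δ : ℝ} (hδ : 0 ≤ δ) :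
    parSet δ = {p : ℝ × ℝ | p.1 ∈ Icc (0:ℝ) 1 ∧
      p.1 ^ 2 - δ ≤ p.2 ∧ p.2 ≤ (1 + δ) * p.1 ^ 2 + δ} := by
  ext ⟨x, y⟩
  simp only [parSet, mem_setOf_eq, mem_Icc]
  constructor
  · rintro ⟨x', ⟨hx0, hx1⟩, a, ⟨ha1, ha2⟩, s, hs, h⟩
    rw [Prod.ext_iff] at h
    obtain ⟨rfl, rfl⟩ : x = x' ∧ y = a * x' ^ 2 + s := ⟨h.1, h.2⟩
    rw [abs_le] at hs
    have hx2 : (0:ℝ) ≤ x ^ 2 := sq_nonneg x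
    refine ⟨⟨hx0, hx1⟩, by nlinarith, by nlinarith⟩
  · rintro ⟨⟨hx0, hx1⟩, hlo, hhi⟩
    have hx2 : (0:ℝ) ≤ x ^ 2 := sq_nonneg x
    by_cases hy : y ≤ x ^ 2 + δ
    · exact ⟨x, ⟨hx0, hx1⟩, 1, ⟨le_refl 1, by linarith⟩, y - x ^ 2,
        abs_le.2 ⟨by linarith, by linarith⟩, Prod.ext_iff.2 ⟨rfl, by ring⟩⟩
    · push_neg at hy
      have hx2pos : 0 < x ^ 2 := by
        rcases hx2.lt_or_eq with h | h
        · exact h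
        · exfalso; nlinarith
      refine ⟨x, ⟨hx0, hx1⟩, (y - δ) / x ^ 2, ⟨?_, ?_⟩, δ,
        by rw [abs_of_nonneg hδ], ?_⟩
      · rw [le_div_iff₀ hx2pos]; linarith
      · rw [div_le_iff₀ hx2pos]; linarith
      · exact Prod.ext_iff.2 ⟨rfl, by rw [div_mul_cancel₀ _ (ne_of_gt hx2pos)]; ring⟩

lemma measurableSet_parSet {δ : ℝ} (hδ : 0 ≤ δ) : MeasurableSet (parSet δ) := by
  rw [parSet_eq hδ]
  have : {p : ℝ × ℝ | p.1 ∈ Icc (0:ℝ) 1 ∧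
      p.1 ^ 2 - δ ≤ p.2 ∧ p.2 ≤ (1 + δ) * p.1 ^ 2 + δ} =
      ((fun p : ℝ × ℝ => p.1) ⁻¹' Icc 0 1) ∩
      ({p : ℝ × ℝ | p.1 ^ 2 - δ ≤ p.2} ∩ {p : ℝ × ℝ | p.2 ≤ (1 + δ) * p.1 ^ 2 + δ}) := by
    ext p; simp [mem_setOf_eq, and_assoc]
  rw [this]
  refine (measurable_fst measurableSet_Icc).inter (MeasurableSet.inter ?_ ?_)
  · exact measurableSet_le (by fun_prop) measurable_snd
  · exact measurableSet_le measurable_snd (by fun_prop)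

end Stmt19Aux

namespace Stmt19Aux

noncomputable def gg (δ : ℝ) : ℝ × ℝ → ℝ := (parSet δ).indicator fun _ => 1

lemma gg_nonneg (δ : ℝ) (p : ℝ × ℝ) : 0 ≤ gg δ p := by
  unfold gg; by_cases h : p ∈ parSet δ <;> simp [indicator, h]

lemma abs_gg_le (δ : ℝ) (p : ℝ × ℝ) : |gg δ p| ≤ 1 := by
  rw [abs_of_nonneg (gg_nonneg δ p)]
  unfold gg; by_cases h : p ∈ parSet δ <;> simp [indicator, h]

lemma gg_eq_one {δ : ℝ} {p : ℝ × ℝ} (h : p ∈ parSet δ) : gg δ p = 1 := by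
  simp [gg, indicator, h]

lemma gg_meas {δ : ℝ} (hδ : 0 ≤ δ) : Measurable (gg δ) :=
  measurable_const.indicator (measurableSet_parSet hδ)

lemma meas_F {δ : ℝ} (hδ : 0 ≤ δ) (a x₁ x₂ : ℝ) :
    Measurable fun p : ℝ × ℝ => |gg δ (x₁ + p.1, x₂ + a * p.1 ^ 2 + p.2)| :=
  ((gg_meas hδ).comp (by fun_prop)).abs

lemma intervalIntegrable_of_bdd {f : ℝ → ℝ} {M : ℝ} (hm : Measurable f)
    (hb : ∀ x, |f x| ≤ M) (c d : ℝ) : IntervalIntegrable f volume c d := by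
  rw [intervalIntegrable_iff]
  refine Integrable.mono' (g := fun _ => M)
    (integrableOn_const measure_Ioc_lt_top.ne enorm_ne_top) hm.aestronglyMeasurable ?_
  exact Filter.Eventually.of_forall fun x => by simpa using hb x

/-- The inner integral. -/
noncomputable def Fi (δ a x₁ x₂ t : ℝ) : ℝ :=
  ∫ s in (-δ)..δ, |gg δ (x₁ + t, x₂ + a * t ^ 2 + s)|

lemma sInt {δ : ℝ} (hδ : 0 ≤ δ) (a x₁ x₂ t c d : ℝ) :
    IntervalIntegrable (fun s => |gg δ (x₁ + t, x₂ + a * t ^ 2 + s)|) volume c d :=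
  intervalIntegrable_of_bdd (M := 1)
    ((meas_F hδ a x₁ x₂).comp (measurable_const.prodMk measurable_id))
    (fun s => by simp only [Function.comp_apply, id, abs_abs]; exact abs_gg_le δ _) c d

lemma Fi_nonneg {δ : ℝ} (hδ : 0 ≤ δ) (a x₁ x₂ t : ℝ) : 0 ≤ Fi δ a x₁ x₂ t :=
  intervalIntegral.integral_nonneg (by linarith) fun s _ => abs_nonneg _

lemma Fi_le {δ : ℝ} (hδ : 0 ≤ δ) (a x₁ x₂ t : ℝ) : Fi δ a x₁ x₂ t ≤ 2 * δ := by
  have h := intervalIntegral.integral_mono_on (μ := volume) (by linarith : -δ ≤ δ)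
    (sInt hδ a x₁ x₂ t (-δ) δ) intervalIntegrable_const
    (fun s _ => abs_gg_le δ (x₁ + t, x₂ + a * t ^ 2 + s))
  simpa [Fi, two_mul] using h

lemma Fi_meas {δ : ℝ} (hδ : 0 ≤ δ) (a x₁ x₂ : ℝ) : Measurable (Fi δ a x₁ x₂) := by
  have heq : Fi δ a x₁ x₂ = fun t => ∫ s, |gg δ (x₁ + t, x₂ + a * t ^ 2 + s)|
      ∂(volume.restrict (Ioc (-δ) δ)) :=
    funext fun t => intervalIntegral.integral_of_le (by linarith)
  rw [heq]
  exact ((meas_F hδ a x₁ x₂).stronglyMeasurable.integral_prod_right').measurable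

lemma Fi_intInt {δ : ℝ} (hδ : 0 ≤ δ) (a x₁ x₂ c d : ℝ) :
    IntervalIntegrable (Fi δ a x₁ x₂) volume c d :=
  intervalIntegrable_of_bdd (Fi_meas hδ a x₁ x₂)
    (fun t => by rw [abs_of_nonneg (Fi_nonneg hδ a x₁ x₂ t)]; exact Fi_le hδ a x₁ x₂ t) c d

lemma outer_le {δ : ℝ} (hδ : 0 < δ) (a x₁ x₂ : ℝ) :
    (2 * δ)⁻¹ * ∫ t in (0:ℝ)..1, Fi δ a x₁ x₂ t ≤ 1 := by
  have h : ∫ t in (0:ℝ)..1, Fi δ a x₁ x₂ t ≤ 2 * δ := by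
    have := intervalIntegral.integral_mono_on (μ := volume) zero_le_one
      (Fi_intInt hδ.le a x₁ x₂ 0 1) intervalIntegrable_const
      (fun t _ => Fi_le hδ.le a x₁ x₂ t)
    simpa using this
  calc (2 * δ)⁻¹ * ∫ t in (0:ℝ)..1, Fi δ a x₁ x₂ t ≤ (2 * δ)⁻¹ * (2 * δ) :=
        mul_le_mul_of_nonneg_left h (by positivity)
    _ = 1 := by field_simp

lemma Pop_eq (δ a : ℝ) :
    Pop δ (gg δ) a = ⨆ x : ℝ × ℝ, (2 * δ)⁻¹ * ∫ t in (0:ℝ)..1, Fi δ a x.1 x.2 t := by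
  unfold Pop Fi; rfl

lemma le_Pop {δ : ℝ} (hδ : 0 < δ) (a x₁ x₂ : ℝ) :
    (2 * δ)⁻¹ * ∫ t in (0:ℝ)..1, Fi δ a x₁ x₂ t ≤ Pop δ (gg δ) a := by
  rw [Pop_eq]
  have := le_ciSup (f := fun x : ℝ × ℝ => (2 * δ)⁻¹ * ∫ t in (0:ℝ)..1, Fi δ a x.1 x.2 t)
    ⟨1, forall_mem_range.2 fun x => outer_le hδ a x.1 x.2⟩ (x₁, x₂)
  exact this

lemma Pop_nonneg {δ : ℝ} (hδ : 0 < δ) (a : ℝ) : 0 ≤ Pop δ (gg δ) a := by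
  rw [Pop_eq]
  exact Real.iSup_nonneg fun x => mul_nonneg (by positivity)
    (intervalIntegral.integral_nonneg zero_le_one fun t _ => Fi_nonneg hδ.le a x.1 x.2 t)

end Stmt19Aux

namespace Stmt19Aux

lemma key {δ a T : ℝ} (hδ : 0 < δ) (ha : 1 ≤ a) (hT0 : 0 ≤ T) (hT1 : T ≤ 1)
    (hc : (a - min a (1 + δ)) * T ^ 2 ≤ δ) : T / 2 ≤ Pop δ (gg δ) a := by
  set b := min a (1 + δ) with hb
  have hba : b ≤ a := min_le_left _ _
  have hb1 : 1 ≤ b := le_min ha (by linarith)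
  have hb2 : b ≤ 1 + δ := min_le_right _ _
  have hFi : ∀ t ∈ Icc (0:ℝ) T, δ ≤ Fi δ a 0 0 t := by
    rintro t ⟨ht0, htT⟩
    set c := (a - b) * t ^ 2 with hcdef
    have hc0 : 0 ≤ c := mul_nonneg (by linarith) (sq_nonneg t)
    have ht2 : t ^ 2 ≤ T ^ 2 := by nlinarith
    have hcT : c ≤ (a - b) * T ^ 2 := by
      rw [hcdef]; exact mul_le_mul_of_nonneg_left ht2 (by linarith)
    have hcδ : c ≤ δ := hcT.trans hc
    have hsub : -δ ≤ δ - c := by linarith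
    have i1 := sInt hδ.le a 0 0 t (-δ) (δ - c)
    have i2 := sInt hδ.le a 0 0 t (δ - c) δ
    have hsplit := intervalIntegral.integral_add_adjacent_intervals i1 i2
    have h1 : (∫ s in (-δ)..(δ - c), |gg δ (0 + t, 0 + a * t ^ 2 + s)|) = 2 * δ - c := by
      have heq : EqOn (fun s => |gg δ (0 + t, 0 + a * t ^ 2 + s)|) (fun _ => (1:ℝ))
          (uIcc (-δ) (δ - c)) := by
        intro s hs
        rw [uIcc_of_le hsub, mem_Icc] at hs
        obtain ⟨hs1, hs2⟩ := hs
        have hmem : ((t:ℝ), a * t ^ 2 + s) ∈ parSet δ := by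
          rw [parSet_eq hδ.le]
          refine ⟨⟨ht0, by linarith⟩, ?_, ?_⟩ <;> dsimp only
          · nlinarith [sq_nonneg t]
          · nlinarith [hcdef, mul_nonneg (by linarith : (0:ℝ) ≤ 1 + δ - b) (sq_nonneg t)]
        simp only [zero_add, gg_eq_one hmem, abs_one]
      rw [intervalIntegral.integral_congr heq, intervalIntegral.integral_const]
      simp; ring
    have h2 : 0 ≤ ∫ s in (δ - c)..δ, |gg δ (0 + t, 0 + a * t ^ 2 + s)| :=
      intervalIntegral.integral_nonneg (by linarith) fun s _ => abs_nonneg _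
    have : Fi δ a 0 0 t = (2 * δ - c) + ∫ s in (δ - c)..δ, |gg δ (0 + t, 0 + a * t ^ 2 + s)| := by
      rw [Fi, ← hsplit, h1]
    linarith
  have houter : δ * T ≤ ∫ t in (0:ℝ)..1, Fi δ a 0 0 t := by
    have hsplit := intervalIntegral.integral_add_adjacent_intervals
      (Fi_intInt hδ.le a 0 0 0 T) (Fi_intInt hδ.le a 0 0 T 1)
    have h1 : δ * T ≤ ∫ t in (0:ℝ)..T, Fi δ a 0 0 t := by
      have := intervalIntegral.integral_mono_on (μ := volume) hT0
        intervalIntegrable_const (Fi_intInt hδ.le a 0 0 0 T) hFi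
      simpa [mul_comm] using this
    have h2 : 0 ≤ ∫ t in T..1, Fi δ a 0 0 t :=
      intervalIntegral.integral_nonneg hT1 fun t _ => Fi_nonneg hδ.le a 0 0 t
    linarith
  calc T / 2 = (2 * δ)⁻¹ * (δ * T) := by field_simp
    _ ≤ (2 * δ)⁻¹ * ∫ t in (0:ℝ)..1, Fi δ a 0 0 t :=
        mul_le_mul_of_nonneg_left houter (by positivity)
    _ ≤ Pop δ (gg δ) a := le_Pop hδ a 0 0

end Stmt19Aux

namespace Stmt19Aux

lemma Pop_ge_half {δ a : ℝ} (hδ : 0 < δ) (ha1 : 1 ≤ a) (ha2 : a ≤ 1 + δ) :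
    1 / 2 ≤ Pop δ (gg δ) a := by
  have hmin : min a (1 + δ) = a := min_eq_left ha2
  have := key hδ ha1 zero_le_one le_rfl (by rw [hmin]; simp [hδ.le])
  linarith

lemma bullet1 {δ a : ℝ} (hδ : 0 < δ) (ha1 : 1 ≤ a) (ha2 : a ≤ 2) (hlt : 1 < a) :
    min 1 (Real.sqrt (δ / (a - 1))) / 2 ≤ Pop δ (gg δ) a := by
  by_cases hcase : a ≤ 1 + δ
  · have h := Pop_ge_half hδ ha1 hcase
    have : min 1 (Real.sqrt (δ / (a - 1))) ≤ 1 := min_le_left _ _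
    linarith
  · push_neg at hcase
    have ha1' : (0:ℝ) < a - 1 := by linarith
    set T := Real.sqrt (δ / (a - 1)) with hT
    have hT0 : 0 ≤ T := Real.sqrt_nonneg _
    have hdiv : δ / (a - 1) ≤ 1 := by
      rw [div_le_one ha1']; linarith
    have hT1 : T ≤ 1 := Real.sqrt_le_one.mpr hdiv
    have hmin : min a (1 + δ) = 1 + δ := min_eq_right hcase.le
    have hsq : T ^ 2 = δ / (a - 1) := Real.sq_sqrt (div_nonneg hδ.le ha1'.le)
    have hc : (a - min a (1 + δ)) * T ^ 2 ≤ δ := by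
      rw [hmin, hsq]
      have h1 : (a - (1 + δ)) * (δ / (a - 1)) ≤ (a - 1) * (δ / (a - 1)) :=
        mul_le_mul_of_nonneg_right (by linarith) (div_nonneg hδ.le ha1'.le)
      have h2 : (a - 1) * (δ / (a - 1)) = δ := by field_simp
      linarith
    have := key hδ ha1 hT0 hT1 hc
    have hmint : min 1 T = T := min_eq_right hT1
    rw [hmint]
    exact this

lemma vol_parSet_le {δ : ℝ} (hδ : 0 < δ) : volume (parSet δ) ≤ ENNReal.ofReal (5 * δ) := by
  set f : ℝ → ℝ := fun x => x ^ 2 - 2 * δ with hfdef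
  set g : ℝ → ℝ := fun x => (1 + δ) * x ^ 2 + 2 * δ with hgdef
  have hf : IntegrableOn f (Icc 0 1) volume :=
    ((continuous_pow 2).sub continuous_const).integrableOn_Icc
  have hg : IntegrableOn g (Icc 0 1) volume :=
    ((continuous_const.mul (continuous_pow 2)).add continuous_const).integrableOn_Icc
  have hle : ∀ x ∈ Icc (0:ℝ) 1, f x ≤ g x := fun x _ => by
    simp only [hfdef, hgdef]; nlinarith [sq_nonneg x]
  have hreg := volume_regionBetween_eq_integral hf hg measurableSet_Icc hle
  have hsub : parSet δ ⊆ regionBetween f g (Icc 0 1) := by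
    rw [parSet_eq hδ.le]
    rintro ⟨x, y⟩ ⟨hx, h1, h2⟩
    refine ⟨hx, ?_, ?_⟩ <;> simp only [hfdef, hgdef] <;> linarith
  have hintle : (∫ y in Icc (0:ℝ) 1, (g - f) y) ≤ 5 * δ := by
    have hb : ∀ y ∈ Icc (0:ℝ) 1, (g - f) y ≤ 5 * δ := by
      rintro y ⟨hy0, hy1⟩
      simp only [Pi.sub_apply, hfdef, hgdef]
      nlinarith [sq_nonneg y, mul_le_mul_of_nonneg_left (show y ^ 2 ≤ 1 by nlinarith) hδ.le]
    have h5 := setIntegral_mono_on (μ := volume) (s := Icc (0:ℝ) 1)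
      (hg.sub hf) (integrableOn_const measure_Icc_lt_top.ne enorm_ne_top) measurableSet_Icc hb
    have hconst : (∫ _ in Icc (0:ℝ) 1, (5 * δ : ℝ)) = 5 * δ := by
      rw [setIntegral_const]
      simp [Real.volume_Icc]
    linarith [h5, hconst.le, hconst.ge]
  calc volume (parSet δ) ≤ (volume : Measure (ℝ × ℝ)) (regionBetween f g (Icc 0 1)) :=
        measure_mono hsub
    _ = ENNReal.ofReal (∫ y in Icc (0:ℝ) 1, (g - f) y) := by
        rw [Measure.volume_eq_prod]; exact hreg
    _ ≤ ENNReal.ofReal (5 * δ) := ENNReal.ofReal_le_ofReal hintle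

end Stmt19Aux

namespace Stmt19Aux

lemma gnorm {δ p : ℝ} (hδ : 0 < δ) (hp : 1 ≤ p) :
    eLpNorm (gg δ) (ENNReal.ofReal p) volume ≤ ENNReal.ofReal (6 * δ ^ (1 / p)) := by
  have hp0 : (0:ℝ) < p := lt_of_lt_of_le one_pos hp
  have hpne : ENNReal.ofReal p ≠ 0 := by
    simp only [ne_eq, ENNReal.ofReal_eq_zero, not_le]; linarith
  have hptop : ENNReal.ofReal p ≠ ⊤ := ENNReal.ofReal_ne_top
  have hgg : gg δ = (parSet δ).indicator fun _ => (1:ℝ) := rfl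
  rw [hgg, eLpNorm_indicator_const (measurableSet_parSet hδ.le) hpne hptop,
    ENNReal.toReal_ofReal hp0.le]
  have h1 : (‖(1:ℝ)‖ₑ : ENNReal) = 1 := by simp
  rw [h1, one_mul]
  have hreal : (5 * δ) ^ (1 / p) ≤ 6 * δ ^ (1 / p) := by
    rw [Real.mul_rpow (by norm_num) hδ.le]
    have h5 : (5:ℝ) ^ (1 / p) ≤ 5 := by
      calc (5:ℝ) ^ (1 / p) ≤ 5 ^ (1:ℝ) :=
            Real.rpow_le_rpow_of_exponent_le (by norm_num)
              (by rw [div_le_one hp0]; linarith)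
        _ = 5 := Real.rpow_one 5
    have hd : (0:ℝ) ≤ δ ^ (1 / p) := Real.rpow_nonneg hδ.le _
    nlinarith
  calc volume (parSet δ) ^ (1 / p) ≤ (ENNReal.ofReal (5 * δ)) ^ (1 / p) :=
        ENNReal.rpow_le_rpow (vol_parSet_le hδ) (by positivity)
    _ = ENNReal.ofReal ((5 * δ) ^ (1 / p)) := ENNReal.ofReal_rpow_of_pos (by linarith)
    _ ≤ ENNReal.ofReal (6 * δ ^ (1 / p)) := ENNReal.ofReal_le_ofReal hreal

lemma popnorm {δ q : ℝ} (hδ : 0 < δ) (hδ1 : δ < 1) (hq0 : 0 < q) :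
    ENNReal.ofReal (2⁻¹ * δ ^ (1 / q)) ≤
      eLpNorm (Pop δ (gg δ)) (ENNReal.ofReal q) (volume.restrict (Icc (1:ℝ) 2)) := by
  have hqne : ENNReal.ofReal q ≠ 0 := by
    simp only [ne_eq, ENNReal.ofReal_eq_zero, not_le]; linarith
  have hqtop : ENNReal.ofReal q ≠ ⊤ := ENNReal.ofReal_ne_top
  have hmono : ∀ x, ‖(Icc (1:ℝ) (1 + δ)).indicator (fun _ => (2⁻¹:ℝ)) x‖ ≤
      ‖Pop δ (gg δ) x‖ := by
    intro x
    by_cases hx : x ∈ Icc (1:ℝ) (1 + δ)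
    · rw [indicator_of_mem hx]
      have h := Pop_ge_half hδ hx.1 hx.2
      rw [Real.norm_eq_abs, Real.norm_eq_abs, abs_of_nonneg (by norm_num : (0:ℝ) ≤ 2⁻¹),
        abs_of_nonneg (Pop_nonneg hδ x)]
      linarith
    · rw [indicator_of_notMem hx]
      simpa using norm_nonneg _
  refine le_trans ?_ (eLpNorm_mono hmono)
  rw [eLpNorm_indicator_const measurableSet_Icc hqne hqtop, ENNReal.toReal_ofReal hq0.le]
  have hrest : (volume.restrict (Icc (1:ℝ) 2)) (Icc (1:ℝ) (1 + δ)) = ENNReal.ofReal δ := by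
    rw [Measure.restrict_apply measurableSet_Icc,
      inter_eq_left.2 (Icc_subset_Icc le_rfl (by linarith)), Real.volume_Icc]
    norm_num
  rw [hrest, Real.enorm_eq_ofReal (by norm_num : (0:ℝ) ≤ 2⁻¹),
    ENNReal.ofReal_rpow_of_pos hδ, ← ENNReal.ofReal_mul (by norm_num)]

end Stmt19Aux


open Stmt19Aux

/-- For `g = 1_S`, `S` the `δ`-thickened curved rectangle of aperture-width `δ`:
`P_δ g(a) ≳ min(1, (δ/(a−1))^{1/2})` for `a ∈ (1,2]` (and `P_δ g(1) ≳ 1`), hence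
`‖P_δ g‖_{L^q([1,2])} ≳ δ^{1/q}` for `q > 2` while `‖g‖_p ≲ δ^{1/p}`, giving
`B(p,q,δ) ≳ δ^{1/q − 1/p}`. -/
theorem stmt19 :
    ∃ K > (0:ℝ), ∃ C > (0:ℝ), ∀ δ : ℝ, 0 < δ → δ < 1 →
      (∀ a ∈ Icc (1:ℝ) 2, 1 < a →
        K * min 1 (Real.sqrt (δ / (a - 1))) ≤
          Pop δ ((parSet δ).indicator fun _ => (1:ℝ)) a) ∧
      (K ≤ Pop δ ((parSet δ).indicator fun _ => (1:ℝ)) 1) ∧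
      (∀ p q : ℝ, 1 ≤ p → 2 < q →
        eLpNorm ((parSet δ).indicator fun _ => (1:ℝ)) (ENNReal.ofReal p) volume ≤
          ENNReal.ofReal (C * δ ^ (1 / p)) ∧
        ENNReal.ofReal (K * δ ^ (1 / q)) ≤
          eLpNorm (Pop δ ((parSet δ).indicator fun _ => (1:ℝ)))
            (ENNReal.ofReal q) (volume.restrict (Icc (1:ℝ) 2)) ∧
        ENNReal.ofReal (K * δ ^ (1 / q - 1 / p)) ≤
          eLpNorm (Pop δ ((parSet δ).indicator fun _ => (1:ℝ)))
              (ENNReal.ofReal q) (volume.restrict (Icc (1:ℝ) 2)) /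
            eLpNorm ((parSet δ).indicator fun _ => (1:ℝ))
              (ENNReal.ofReal p) volume) := by
  refine ⟨1/12, by norm_num, 6, by norm_num, fun δ hδ hδ1 => ?_⟩
  have hg : ((parSet δ).indicator fun _ => (1:ℝ)) = gg δ := rfl
  rw [hg]
  refine ⟨?_, ?_, ?_⟩
  · rintro a ⟨ha1, ha2⟩ hlt
    have h := bullet1 hδ ha1 ha2 hlt
    have hmin0 : 0 ≤ min 1 (Real.sqrt (δ / (a - 1))) :=
      le_min zero_le_one (Real.sqrt_nonneg _)
    linarith
  · have := Pop_ge_half hδ le_rfl (by linarith); linarith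
  · intro p q hp hq
    have hq0 : (0:ℝ) < q := by linarith
    refine ⟨gnorm hδ hp, ?_, ?_⟩
    · refine le_trans (ENNReal.ofReal_le_ofReal ?_) (popnorm hδ hδ1 hq0)
      have hd : (0:ℝ) ≤ δ ^ (1/q) := Real.rpow_nonneg hδ.le _
      nlinarith
    · have h1 := popnorm hδ hδ1 hq0
      have h2 := gnorm hδ hp
      calc ENNReal.ofReal (1/12 * δ ^ (1/q - 1/p))
          = ENNReal.ofReal ((2⁻¹ * δ ^ (1/q)) / (6 * δ ^ (1/p))) := by
            congr 1
            rw [Real.rpow_sub hδ]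
            have hne : δ ^ (1/p) ≠ 0 := ne_of_gt (Real.rpow_pos_of_pos hδ _)
            field_simp
            norm_num
        _ = ENNReal.ofReal (2⁻¹ * δ ^ (1/q)) / ENNReal.ofReal (6 * δ ^ (1/p)) :=
            ENNReal.ofReal_div_of_pos (by positivity)
        _ ≤ _ := ENNReal.div_le_div h1 h2
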